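/- If A is a P-Frobenius algebra over k and B is a Q-Frobenius algebra over k, then the tensor product algebra A ⊗_k B is a (P ⊗_k Q)-Frobenius algebra. -/

import Mathlib

open scoped TensorProduct

def IsInvertibleModule (k P : Type*) [CommRing k] [AddCommGroup P] [Module k P] : Prop :=
  Module.Finite k P ∧ Module.Projective k P ∧ Function.Bijective (contractRight k P)

/-- `A` is a `P`-Frobenius `k`-algebra: finitely generated projective over `k` and
`A ≅ Hom_k(A,P)` as right `A`-modules, where `(f·a)(x) = f(ax)`. -/
def IsPFrobeniusAlgebra (k A P : Type*) [CommRing k] [Ring A] [Algebra k A]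
    [AddCommGroup P] [Module k P] : Prop :=
  Module.Finite k A ∧ Module.Projective k A ∧
    ∃ Φ : A ≃ₗ[k] (A →ₗ[k] P), ∀ a x z : A, Φ (x * a) z = Φ x (a * z)

section Aux

variable (R M N P Q : Type*) [CommRing R]
  [AddCommGroup M] [Module R M] [AddCommGroup N] [Module R N]
  [AddCommGroup P] [Module R P] [AddCommGroup Q] [Module R Q]

theorem homTensorHomMap_bijective_of_projective
    [Module.Finite R M] [Module.Projective R M]
    [Module.Finite R N] [Module.Projective R N] :
    Function.Bijective (TensorProduct.homTensorHomMap (RingHom.id R) M N P Q) := by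
  classical
  obtain ⟨m, pA, iA, -, -, hA⟩ := Module.Finite.exists_comp_eq_id_of_projective R M
  obtain ⟨n, pB, iB, -, -, hB⟩ := Module.Finite.exists_comp_eq_id_of_projective R N
  set F := Fin m → R
  set G := Fin n → R
  -- the natural maps between the two corners
  set α : ((M →ₗ[R] P) ⊗[R] (N →ₗ[R] Q)) →ₗ[R] ((F →ₗ[R] P) ⊗[R] (G →ₗ[R] Q)) :=
    TensorProduct.map (LinearMap.lcomp R P pA) (LinearMap.lcomp R Q pB) with hα
  set β : ((F →ₗ[R] P) ⊗[R] (G →ₗ[R] Q)) →ₗ[R] ((M →ₗ[R] P) ⊗[R] (N →ₗ[R] Q)) :=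
    TensorProduct.map (LinearMap.lcomp R P iA) (LinearMap.lcomp R Q iB) with hβ
  set γ : ((F ⊗[R] G) →ₗ[R] (P ⊗[R] Q)) →ₗ[R] ((M ⊗[R] N) →ₗ[R] (P ⊗[R] Q)) :=
    LinearMap.lcomp R (P ⊗[R] Q) (TensorProduct.map iA iB) with hγ
  set δ : ((M ⊗[R] N) →ₗ[R] (P ⊗[R] Q)) →ₗ[R] ((F ⊗[R] G) →ₗ[R] (P ⊗[R] Q)) :=
    LinearMap.lcomp R (P ⊗[R] Q) (TensorProduct.map pA pB) with hδ
  have hβα : ∀ x, β (α x) = x := by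
    intro x
    have : β ∘ₗ α = LinearMap.id := by
      rw [hα, hβ, ← TensorProduct.map_comp]
      have h1 : LinearMap.lcomp R P iA ∘ₗ LinearMap.lcomp R P pA = LinearMap.id := by
        apply LinearMap.ext; intro f
        simp only [LinearMap.comp_apply, LinearMap.lcomp_apply', LinearMap.id_apply]
        rw [LinearMap.comp_assoc, hA, LinearMap.comp_id]
      have h2 : LinearMap.lcomp R Q iB ∘ₗ LinearMap.lcomp R Q pB = LinearMap.id := by
        apply LinearMap.ext; intro f
        simp only [LinearMap.comp_apply, LinearMap.lcomp_apply', LinearMap.id_apply]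
        rw [LinearMap.comp_assoc, hB, LinearMap.comp_id]
      rw [h1, h2, TensorProduct.map_id]
    calc β (α x) = (β ∘ₗ α) x := rfl
    _ = x := by rw [this]; rfl
  -- naturality
  have nat1 : ∀ x, δ (TensorProduct.homTensorHomMap (RingHom.id R) M N P Q x) =
      TensorProduct.homTensorHomMap (RingHom.id R) F G P Q (α x) := by
    intro x
    have : δ ∘ₗ TensorProduct.homTensorHomMap (RingHom.id R) M N P Q =
        TensorProduct.homTensorHomMap (RingHom.id R) F G P Q ∘ₗ α := by
      apply TensorProduct.ext'
      intro f g
      simp only [LinearMap.comp_apply, hα, TensorProduct.map_tmul,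
        TensorProduct.homTensorHomMap_apply, hδ, LinearMap.lcomp_apply']
      rw [← TensorProduct.map_comp]
    calc δ (TensorProduct.homTensorHomMap (RingHom.id R) M N P Q x)
        = (δ ∘ₗ TensorProduct.homTensorHomMap (RingHom.id R) M N P Q) x := rfl
    _ = TensorProduct.homTensorHomMap (RingHom.id R) F G P Q (α x) := by rw [this]; rfl
  have nat2 : ∀ y, TensorProduct.homTensorHomMap (RingHom.id R) M N P Q (β y) =
      γ (TensorProduct.homTensorHomMap (RingHom.id R) F G P Q y) := by
    intro y
    have : TensorProduct.homTensorHomMap (RingHom.id R) M N P Q ∘ₗ β =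
        γ ∘ₗ TensorProduct.homTensorHomMap (RingHom.id R) F G P Q := by
      apply TensorProduct.ext'
      intro f g
      simp only [LinearMap.comp_apply, hβ, TensorProduct.map_tmul,
        TensorProduct.homTensorHomMap_apply, hγ, LinearMap.lcomp_apply']
      rw [← TensorProduct.map_comp]
    calc TensorProduct.homTensorHomMap (RingHom.id R) M N P Q (β y)
        = (TensorProduct.homTensorHomMap (RingHom.id R) M N P Q ∘ₗ β) y := rfl
    _ = γ (TensorProduct.homTensorHomMap (RingHom.id R) F G P Q y) := by rw [this]; rfl
  have hfree : Function.Bijective (TensorProduct.homTensorHomMap (RingHom.id R) F G P Q) := by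
    rw [← homTensorHomEquiv_toLinearMap R F G P Q]
    exact (homTensorHomEquiv R F G P Q).bijective
  have hγδ : ∀ h, γ (δ h) = h := by
    intro h
    rw [hγ, hδ]
    simp only [LinearMap.lcomp_apply']
    rw [LinearMap.comp_assoc, ← TensorProduct.map_comp, hA, hB, TensorProduct.map_id,
      LinearMap.comp_id]
  constructor
  · intro x y hxy
    have h1 : TensorProduct.homTensorHomMap (RingHom.id R) F G P Q (α x) =
        TensorProduct.homTensorHomMap (RingHom.id R) F G P Q (α y) := by
      rw [← nat1, ← nat1, hxy]
    have := hfree.injective h1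
    rw [← hβα x, ← hβα y, this]
  · intro h
    obtain ⟨y, hy⟩ := hfree.surjective (δ h)
    refine ⟨β y, ?_⟩
    rw [nat2, hy, hγδ]

end Aux

/-- If `A` is `P`-Frobenius and `B` is `Q`-Frobenius over `k`, then the tensor product
algebra `A ⊗ₖ B` is `(P ⊗ₖ Q)`-Frobenius. -/
theorem tensorProduct_pFrobenius (k A B P Q : Type*) [CommRing k]
    [Ring A] [Algebra k A] [Ring B] [Algebra k B]
    [AddCommGroup P] [Module k P] [AddCommGroup Q] [Module k Q]
    (hP : IsInvertibleModule k P) (hQ : IsInvertibleModule k Q)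
    (hA : IsPFrobeniusAlgebra k A P) (hB : IsPFrobeniusAlgebra k B Q) :
    IsPFrobeniusAlgebra k (A ⊗[k] B) (P ⊗[k] Q) := by
  obtain ⟨hAfin, hAproj, ΦA, hΦA⟩ := hA
  obtain ⟨hBfin, hBproj, ΦB, hΦB⟩ := hB
  refine ⟨Module.Finite.tensorProduct k A B, Module.Projective.tensorProduct, ?_⟩
  set e : ((A →ₗ[k] P) ⊗[k] (B →ₗ[k] Q)) ≃ₗ[k] ((A ⊗[k] B) →ₗ[k] (P ⊗[k] Q)) :=
    LinearEquiv.ofBijective _ (homTensorHomMap_bijective_of_projective k A B P Q)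
  refine ⟨(TensorProduct.congr ΦA ΦB).trans e, ?_⟩
  have key : ∀ (a₁ x₁ z₁ : A) (a₂ x₂ z₂ : B),
      ((TensorProduct.congr ΦA ΦB).trans e) ((x₁ ⊗ₜ[k] x₂) * (a₁ ⊗ₜ[k] a₂)) (z₁ ⊗ₜ[k] z₂) =
      ((TensorProduct.congr ΦA ΦB).trans e) (x₁ ⊗ₜ[k] x₂) ((a₁ ⊗ₜ[k] a₂) * (z₁ ⊗ₜ[k] z₂)) := by
    intro a₁ x₁ z₁ a₂ x₂ z₂
    simp only [Algebra.TensorProduct.tmul_mul_tmul, LinearEquiv.trans_apply,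
      TensorProduct.congr_tmul, e, LinearEquiv.ofBijective_apply,
      TensorProduct.homTensorHomMap_apply, TensorProduct.map_tmul]
    rw [hΦA, hΦB]
  intro a x z
  induction a using TensorProduct.induction_on with
  | zero => simp
  | add u v hu hv =>
    simp only [mul_add, add_mul, map_add, LinearMap.add_apply, hu, hv]
  | tmul a₁ a₂ =>
    induction x using TensorProduct.induction_on with
    | zero => simp
    | add u v hu hv =>
      simp only [add_mul, map_add, LinearMap.add_apply, hu, hv]
    | tmul x₁ x₂ =>
      induction z using TensorProduct.induction_on with
      | zero => simp
      | add u v hu hv =>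
        simp only [mul_add, map_add, hu, hv]
      | tmul z₁ z₂ => exact key a₁ x₁ z₁ a₂ x₂ z₂
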